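/- There do not exist four squares of rational numbers in nontrivial arithmetic progression, i.e., there are no rationals a, b, c, d with a^2, b^2, c^2, d^2 in arithmetic progression with nonzero common difference. -/

import Mathlib

lemma sqm4 (x : ℤ) : x^2 % 4 = 0 ∨ x^2 % 4 = 1 := by
  rcases Int.even_or_odd x with ⟨k, rfl⟩ | ⟨k, rfl⟩
  · left
    have : (k+k)^2 = 4*k^2 := by ring
    rw [this]
    exact Int.mul_emod_right 4 _
  · right
    have : (2*k+1)^2 = 1 + 4*(k^2+k) := by ring
    omega

lemma odd_sq_m8 {x : ℤ} (h : Odd x) : x^2 % 8 = 1 := by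
  obtain ⟨k, rfl⟩ := h
  have h2 : Even (k^2+k) := by
    have := Int.even_mul_succ_self k
    have e : k * (k+1) = k^2 + k := by ring
    rwa [e] at this
  obtain ⟨m, hm⟩ := h2
  have : (2*k+1)^2 = 1 + 8*m := by rw [show (2*k+1)^2 = 1 + 4*(k^2+k) by ring, hm]; ring
  omega

lemma three_dvd {s t : ℤ} (h : (3:ℤ) ∣ s^2 + t^2) : (3:ℤ) ∣ s ∧ (3:ℤ) ∣ t := by
  have key : ∀ x y : ZMod 3, x^2 + y^2 = 0 → x = 0 ∧ y = 0 := by decide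
  have h0 : ((s^2 + t^2 : ℤ) : ZMod 3) = 0 := by
    rw [ZMod.intCast_zmod_eq_zero_iff_dvd]; exact_mod_cast h
  push_cast at h0
  obtain ⟨hs, ht⟩ := key _ _ h0
  constructor <;> rw [show ((3:ℤ)) = ((3:ℕ):ℤ) by norm_num, ← ZMod.intCast_zmod_eq_zero_iff_dvd] <;> assumption

lemma coprime_of_primes {a b : ℤ} (h : ∀ p : ℕ, p.Prime → (p:ℤ) ∣ a → (p:ℤ) ∣ b → False) :
    IsCoprime a b := by
  rw [Int.isCoprime_iff_gcd_eq_one]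
  by_contra hg
  obtain ⟨p, hp, hpd⟩ := Nat.exists_prime_and_dvd hg
  exact h p hp (dvd_trans (Int.natCast_dvd_natCast.mpr hpd) (Int.gcd_dvd_left _ _))
    (dvd_trans (Int.natCast_dvd_natCast.mpr hpd) (Int.gcd_dvd_right _ _))

lemma pos_sq {a b c : ℤ} (hco : IsCoprime a b) (h : a * b = c^2) (ha : 0 < a) :
    ∃ r : ℤ, 0 ≤ r ∧ a = r^2 := by
  obtain ⟨a0, h0 | h0⟩ := Int.sq_of_isCoprime hco h
  · exact ⟨|a0|, abs_nonneg _, by rw [h0, sq_abs]⟩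
  · exfalso; nlinarith [sq_nonneg a0]

lemma prime_dvd_sq {p : ℕ} (hp : p.Prime) {a : ℤ} (h : (p:ℤ) ∣ a^2) : (p:ℤ) ∣ a :=
  (Int.Prime.dvd_pow' hp h)

lemma not_unit_prime {p : ℕ} (hp : p.Prime) : ¬ IsUnit (p : ℤ) := by
  rw [Int.isUnit_iff]
  have := hp.two_le
  rintro (h | h) <;> omega

lemma prime_int {p : ℕ} (hp : p.Prime) : Prime (p : ℤ) := Nat.prime_iff_prime_int.mp hp

lemma even_sq_iff (x : ℤ) : Even (x^2) ↔ Even x := by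
  rw [Int.even_pow]; simp

lemma split_sq {a b c : ℤ} (hco : IsCoprime a b) (h : a * b = c^2) (ha : 0 < a) (hb : 0 < b) :
    ∃ r s : ℤ, 0 ≤ r ∧ 0 ≤ s ∧ a = r^2 ∧ b = s^2 := by
  obtain ⟨r, hr0, hr⟩ := pos_sq hco h ha
  obtain ⟨s, hs0, hs⟩ := pos_sq hco.symm (by rw [mul_comm]; exact h) hb
  exact ⟨r, s, hr0, hs0, hr, hs⟩

/-- coprime positive k1 k2 with odd sum and k1*k2 = 2*D^2 split as 2s^2 and t^2. -/
lemma split2 {k1 k2 D : ℤ} (hco : IsCoprime k1 k2) (h : k1 * k2 = 2 * D^2)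
    (h1 : 0 < k1) (h2 : 0 < k2) (hodd : Odd (k1 + k2)) (hD : D ≠ 0) :
    ∃ s t : ℤ, 0 ≤ s ∧ 0 ≤ t ∧ Odd t ∧ s ≠ 0 ∧ t ≠ 0 ∧ IsCoprime s t ∧
      D^2 = s^2 * t^2 ∧ k1 + k2 = 2 * s^2 + t^2 ∧ (k2 - k1)^2 = (t^2 - 2*s^2)^2 := by
  have hDD : (0:ℤ) < D^2 := by positivity
  have hpar : ¬ (Even k1 ∧ Even k2) := by
    rintro ⟨⟨x, hx⟩, ⟨y, hy⟩⟩
    rw [Int.odd_iff] at hodd; omega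
  have key : ∀ ka kb : ℤ, IsCoprime ka kb → ka * kb = 2 * D^2 → 0 < ka → 0 < kb →
      Even ka → Odd kb →
      ∃ s t : ℤ, 0 ≤ s ∧ 0 ≤ t ∧ Odd t ∧ s ≠ 0 ∧ t ≠ 0 ∧ IsCoprime s t ∧
        D^2 = s^2 * t^2 ∧ ka + kb = 2 * s^2 + t^2 ∧ kb - ka = t^2 - 2*s^2 := by
    intro ka kb hco h h1 h2 he ho
    obtain ⟨x, hx⟩ := he
    have hx2 : ka = 2 * x := by omega
    have hxkb : x * kb = D^2 := by
      have h4 : 2 * (x * kb) = 2 * D^2 := by linear_combination h - kb * hx2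
      exact mul_left_cancel₀ two_ne_zero h4
    have hx0 : 0 < x := by omega
    have hcx : IsCoprime x kb := IsCoprime.of_isCoprime_of_dvd_left hco ⟨2, by omega⟩
    obtain ⟨s, t, hs0, ht0, hs, ht⟩ := split_sq hcx hxkb hx0 h2
    have htodd : Odd t := by
      have : Odd (t^2) := ht ▸ ho
      rcases Int.even_or_odd t with hte | hto
      · exfalso; exact (Int.not_odd_iff_even.mpr ((even_sq_iff t).mpr hte)) this
      · exact hto
    have hsums : ka + kb = 2 * s^2 + t^2 := by
      rw [hx2, hs] at *; omega
    have hdiffs : kb - ka = t^2 - 2*s^2 := by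
      rw [hx2, hs] at *; omega
    refine ⟨s, t, hs0, ht0, htodd, ?_, ?_, ?_, by rw [← hs, ← ht]; exact hxkb.symm, hsums, hdiffs⟩
    · rintro rfl; simp at hs; omega
    · rintro rfl; simp at ht; omega
    · apply coprime_of_primes
      intro p hp hps hpt
      exact not_unit_prime hp (hcx.isUnit_of_dvd' (hs ▸ (Dvd.dvd.pow hps two_ne_zero : (p:ℤ) ∣ s^2))
        (ht ▸ (Dvd.dvd.pow hpt two_ne_zero : (p:ℤ) ∣ t^2)))
  rcases Int.even_or_odd k1 with he1 | ho1
  · have ho2 : Odd k2 := by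
      rcases Int.even_or_odd k2 with he2 | ho2
      · exact absurd ⟨he1, he2⟩ hpar
      · exact ho2
    obtain ⟨s, t, hs0, ht0, htodd, hsne, htne, hst, hD2, hsum, hdiff⟩ :=
      key k1 k2 hco h h1 h2 he1 ho2
    exact ⟨s, t, hs0, ht0, htodd, hsne, htne, hst, hD2, hsum, by rw [hdiff]⟩
  · have he2 : Even k2 := by
      rcases Int.even_or_odd k2 with he2 | ho2
      · exact he2
      · exfalso; rw [Int.odd_iff] at hodd ho1 ho2; omega
    obtain ⟨s, t, hs0, ht0, htodd, hsne, htne, hst, hD2, hsum, hdiff⟩ :=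
      key k2 k1 hco.symm (by rw [mul_comm]; exact h) h2 h1 he2 ho1
    refine ⟨s, t, hs0, ht0, htodd, hsne, htne, hst, hD2, by omega, ?_⟩
    have hneg : k2 - k1 = -(t^2 - 2*s^2) := by omega
    rw [hneg]; ring


lemma parity_sq_mod2 {x : ℤ} : (Even x → x^2 % 2 = 0) ∧ (Odd x → x^2 % 2 = 1) := by
  constructor
  · intro h; exact Int.even_iff.mp ((even_sq_iff x).mpr h)
  · intro h; exact Int.odd_iff.mp h.pow

/-- coprime positive k1 k2 with odd sum and k1*k2 = 3*σ^2 split as 3α^2 and β^2. -/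
lemma split3 {k1 k2 σ : ℤ} (hco : IsCoprime k1 k2) (h : k1 * k2 = 3 * σ^2)
    (h1 : 0 < k1) (h2 : 0 < k2) (hodd : Odd (k1 + k2)) (hσ : σ ≠ 0) :
    ∃ α β : ℤ, 0 ≤ α ∧ 0 ≤ β ∧ α ≠ 0 ∧ β ≠ 0 ∧ IsCoprime α β ∧
      ((Even α ∧ Odd β) ∨ (Odd α ∧ Even β)) ∧
      σ^2 = α^2 * β^2 ∧ k1 + k2 = 3 * α^2 + β^2 ∧ (k2 - k1)^2 = (β^2 - 3*α^2)^2 ∧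
      β^2 < k1 + k2 := by
  have h3 : (3:ℤ) ∣ k1 * k2 := ⟨σ^2, h⟩
  have hp3 : Prime (3:ℤ) := prime_int (by norm_num)
  have key : ∀ ka kb : ℤ, IsCoprime ka kb → ka * kb = 3 * σ^2 → 0 < ka → 0 < kb →
      (3:ℤ) ∣ ka →
      ∃ α β : ℤ, 0 ≤ α ∧ 0 ≤ β ∧ α ≠ 0 ∧ β ≠ 0 ∧ IsCoprime α β ∧
        ka + kb = 3 * α^2 + β^2 ∧
        σ^2 = α^2 * β^2 ∧ kb - ka = β^2 - 3*α^2 ∧ β^2 < ka + kb := by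
    intro ka kb hco h h1 h2 hdvd
    obtain ⟨x, hx⟩ := hdvd
    have hxkb : x * kb = σ^2 := by
      have h4 : 3 * (x * kb) = 3 * σ^2 := by linear_combination h - kb * hx
      exact mul_left_cancel₀ (by norm_num) h4
    have hx0 : 0 < x := by nlinarith
    have hcx : IsCoprime x kb := IsCoprime.of_isCoprime_of_dvd_left hco ⟨3, by linarith [hx]⟩
    obtain ⟨α, β, ha0, hb0, ha, hb⟩ := split_sq hcx hxkb hx0 h2
    have hane : α ≠ 0 := by rintro rfl; simp at ha; omega
    have hbne : β ≠ 0 := by rintro rfl; simp at hb; omega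
    have hcoab : IsCoprime α β := by
      apply coprime_of_primes
      intro p hp hps hpt
      exact not_unit_prime hp (hcx.isUnit_of_dvd' (ha ▸ (Dvd.dvd.pow hps two_ne_zero : (p:ℤ) ∣ α^2))
        (hb ▸ (Dvd.dvd.pow hpt two_ne_zero : (p:ℤ) ∣ β^2)))
    exact ⟨α, β, ha0, hb0, hane, hbne, hcoab, by rw [hx, ha, hb]; try ring,
      by rw [ha, hb] at hxkb; exact hxkb.symm, by rw [hx, ha, hb]; try ring, by nlinarith⟩
  have main : ∃ α β : ℤ, 0 ≤ α ∧ 0 ≤ β ∧ α ≠ 0 ∧ β ≠ 0 ∧ IsCoprime α β ∧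
      σ^2 = α^2 * β^2 ∧ k1 + k2 = 3 * α^2 + β^2 ∧ (k2 - k1)^2 = (β^2 - 3*α^2)^2 ∧
      β^2 < k1 + k2 := by
    rcases (hp3.2.2 k1 k2 h3) with hd | hd
    · obtain ⟨α, β, ha0, hb0, hane, hbne, hcoab, hsum, hσ2, hdiff, hlt⟩ :=
        key k1 k2 hco h h1 h2 hd
      exact ⟨α, β, ha0, hb0, hane, hbne, hcoab, hσ2, hsum, by rw [hdiff], hlt⟩
    · obtain ⟨α, β, ha0, hb0, hane, hbne, hcoab, hsum, hσ2, hdiff, hlt⟩ :=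
        key k2 k1 hco.symm (by rw [mul_comm]; exact h) h2 h1 hd
      refine ⟨α, β, ha0, hb0, hane, hbne, hcoab, hσ2, by omega, ?_, by omega⟩
      have : k2 - k1 = -(β^2 - 3*α^2) := by omega
      rw [this]; ring
  obtain ⟨α, β, ha0, hb0, hane, hbne, hcoab, hσ2, hsum, hdiff, hlt⟩ := main
  refine ⟨α, β, ha0, hb0, hane, hbne, hcoab, ?_, hσ2, hsum, hdiff, hlt⟩
  -- parity
  have hks : (k1 + k2) % 2 = 1 := Int.odd_iff.mp hodd
  rcases Int.even_or_odd α with heα | hoα <;> rcases Int.even_or_odd β with heβ | hoβ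
  · exfalso
    have h1 := parity_sq_mod2.1 heα; have h2 := parity_sq_mod2.1 heβ; omega
  · exact Or.inl ⟨heα, hoβ⟩
  · exact Or.inr ⟨hoα, heβ⟩
  · exfalso
    have h1 := parity_sq_mod2.2 hoα; have h2 := parity_sq_mod2.2 hoβ; omega

lemma even_of_two_dvd {a : ℤ} (h : (2:ℤ) ∣ a) : Even a := by
  obtain ⟨c, hc⟩ := h; exact ⟨c, by omega⟩

lemma p_dvd_two {p : ℕ} (hp : p.Prime) (h : (p:ℤ) ∣ 2) : p = 2 := by
  have h2 : (p:ℤ) ∣ ((2:ℕ):ℤ) := by exact_mod_cast h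
  exact (Nat.prime_dvd_prime_iff_eq hp Nat.prime_two).mp (Int.natCast_dvd_natCast.mp h2)

lemma p_dvd_eight {p : ℕ} (hp : p.Prime) (h : (p:ℤ) ∣ 8) : p = 2 := by
  have h8 : ((8:ℤ)) = 2^3 := by norm_num
  exact p_dvd_two hp ((prime_int hp).dvd_of_dvd_pow (h8 ▸ h))

lemma p_dvd_three {p : ℕ} (hp : p.Prime) (h : (p:ℤ) ∣ 3) : p = 3 := by
  have h2 : (p:ℤ) ∣ ((3:ℕ):ℤ) := by exact_mod_cast h
  exact (Nat.prime_dvd_prime_iff_eq hp Nat.prime_three).mp (Int.natCast_dvd_natCast.mp h2)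

theorem q_to_n4 : ∀ (n : ℕ) (X Y Z D : ℤ), Z.natAbs ≤ n → D ≠ 0 →
    X^2 + D^2 = Z^2 → Y^2 + 9*D^2 = Z^2 →
    ∃ s t u v : ℤ, s ≠ 0 ∧ t ≠ 0 ∧ IsCoprime s t ∧ Odd t ∧
      s^2 + t^2 = u^2 ∧ 4*s^2 + t^2 = v^2 ∧ u^2 ≤ |Z| := by
  intro n
  induction n using Nat.strong_induction_on with
  | _ n ih =>
  intro X Y Z D hn hD hX hY
  have hD2 : (0:ℤ) < D^2 := by positivity
  have hZ0 : Z ≠ 0 := by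
    rintro rfl
    nlinarith [sq_nonneg X]
  by_cases hg : Int.gcd Z D = 1
  case neg =>
    have hgz : ((Int.gcd Z D : ℕ):ℤ) ∣ Z := Int.gcd_dvd_left _ _
    have hgd : ((Int.gcd Z D : ℕ):ℤ) ∣ D := Int.gcd_dvd_right _ _
    have hg0 : Int.gcd Z D ≠ 0 := fun h => hZ0 (Int.gcd_eq_zero_iff.mp h).1
    set g : ℤ := ((Int.gcd Z D : ℕ):ℤ) with hgdef
    have hg2n : 2 ≤ Int.gcd Z D := by omega
    have hgpos : (0:ℤ) ≤ g := by rw [hgdef]; exact Int.natCast_nonneg _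
    have hg2 : (2:ℤ) ≤ g := by rw [hgdef]; exact_mod_cast hg2n
    obtain ⟨Z', hZ'⟩ := hgz
    obtain ⟨D', hD'⟩ := hgd
    have hgne : g ≠ 0 := by omega
    have hdX : g ∣ X := by
      rw [← Int.pow_dvd_pow_iff (two_ne_zero)]
      exact ⟨Z'^2 - D'^2, by rw [hZ', hD'] at hX; linear_combination hX⟩
    have hdY : g ∣ Y := by
      rw [← Int.pow_dvd_pow_iff (two_ne_zero)]
      exact ⟨Z'^2 - 9*D'^2, by rw [hZ', hD'] at hY; linear_combination hY⟩
    obtain ⟨X', hX'⟩ := hdX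
    obtain ⟨Y', hY'⟩ := hdY
    have hXn : X'^2 + D'^2 = Z'^2 := by
      have h2 : g^2 * (X'^2 + D'^2) = g^2 * Z'^2 := by
        rw [hX', hZ', hD'] at hX; linear_combination hX
      exact mul_left_cancel₀ (pow_ne_zero 2 hgne) h2
    have hYn : Y'^2 + 9*D'^2 = Z'^2 := by
      have h2 : g^2 * (Y'^2 + 9*D'^2) = g^2 * Z'^2 := by
        rw [hY', hZ', hD'] at hY; linear_combination hY
      exact mul_left_cancel₀ (pow_ne_zero 2 hgne) h2
    have hD'0 : D' ≠ 0 := by rintro rfl; rw [hD'] at hD; simp at hD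
    have hZ'0 : Z' ≠ 0 := by rintro rfl; rw [hZ'] at hZ0; simp at hZ0
    have habs : Z.natAbs = g.natAbs * Z'.natAbs := by rw [hZ', Int.natAbs_mul]
    have hZ'lt : Z'.natAbs < n := by
      have h1 : 1 ≤ Z'.natAbs := by omega
      have h2 : 2 ≤ g.natAbs := by omega
      nlinarith
    obtain ⟨s, t, u, v, hs, ht, hco, hodd, h1, h2, hle⟩ :=
      ih Z'.natAbs hZ'lt X' Y' Z' D' le_rfl hD'0 hXn hYn
    refine ⟨s, t, u, v, hs, ht, hco, hodd, h1, h2, le_trans hle ?_⟩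
    rw [hZ', abs_mul]
    have h1g : (1:ℤ) ≤ |g| := by rw [abs_of_nonneg hgpos]; omega
    nlinarith [abs_nonneg Z']
  case pos =>
    have hco : IsCoprime Z D := Int.isCoprime_iff_gcd_eq_one.mpr hg
    have hDeven : Even D := by
      by_contra hDo
      rw [Int.not_even_iff_odd] at hDo
      have hd8 : D^2 % 8 = 1 := odd_sq_m8 hDo
      rcases Int.even_or_odd Z with ⟨z, hz⟩ | hZo
      · have hz2 : Z^2 = 4*z^2 := by rw [hz]; ring
        have h4 := sqm4 X
        omega
      · have hz8 : Z^2 % 8 = 1 := odd_sq_m8 hZo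
        have hXe : Even X := by
          rcases Int.even_or_odd X with h | h
          · exact h
          · have := odd_sq_m8 h; omega
        obtain ⟨x, hx⟩ := hXe
        have hx4 : Even x := by
          have hxx : X^2 = 4*x^2 := by rw [hx]; ring
          rcases Int.even_or_odd x with h | h
          · exact h
          · have := odd_sq_m8 h; omega
        obtain ⟨x', hx'⟩ := hx4
        have hX16 : X^2 = 16*x'^2 := by rw [hx, hx']; ring
        have hYe : Even Y := by
          rcases Int.even_or_odd Y with h | h
          · exact h
          · have := odd_sq_m8 h; omega
        obtain ⟨y, hy⟩ := hYe
        have hy4 : Even y := by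
          have hyy : Y^2 = 4*y^2 := by rw [hy]; ring
          rcases Int.even_or_odd y with h | h
          · exact h
          · have := odd_sq_m8 h; omega
        obtain ⟨y', hy'⟩ := hy4
        have hY16 : Y^2 = 16*y'^2 := by rw [hy, hy']; ring
        have hD2odd : D^2 % 2 = 1 := Int.odd_iff.mp hDo.pow
        omega
    have hZodd : Odd Z := by
      rcases Int.even_or_odd Z with hZe | h
      · exfalso
        apply not_unit_prime (Nat.prime_two)
        have h2 : ((2:ℕ):ℤ) = 2 := by norm_num
        rw [h2]
        exact hco.isUnit_of_dvd' hZe.two_dvd hDeven.two_dvd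
      · exact h
    have hXodd : Odd X := by
      rcases Int.even_or_odd X with h | h
      · exfalso
        have h1 : X^2 % 2 = 0 := parity_sq_mod2.1 h
        have h2 : Z^2 % 2 = 1 := Int.odd_iff.mp hZodd.pow
        have h3 : D^2 % 2 = 0 := parity_sq_mod2.1 hDeven
        omega
      · exact h
    have hYodd : Odd Y := by
      rcases Int.even_or_odd Y with h | h
      · exfalso
        have h1 : Y^2 % 2 = 0 := parity_sq_mod2.1 h
        have h2 : Z^2 % 2 = 1 := Int.odd_iff.mp hZodd.pow
        have h3 : D^2 % 2 = 0 := parity_sq_mod2.1 hDeven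
        omega
      · exact h
    obtain ⟨X, hX0', hXodd, hX⟩ : ∃ W:ℤ, 0 ≤ W ∧ Odd W ∧ W^2 + D^2 = Z^2 :=
      ⟨|X|, abs_nonneg _, odd_abs.mpr hXodd, by rw [sq_abs]; exact hX⟩
    obtain ⟨Y, hY0', hYodd, hY⟩ : ∃ W:ℤ, 0 ≤ W ∧ Odd W ∧ W^2 + 9*D^2 = Z^2 :=
      ⟨|Y|, abs_nonneg _, odd_abs.mpr hYodd, by rw [sq_abs]; exact hY⟩
    have hXY : Y < X := by nlinarith
    have hevXY : Even (X - Y) := hXodd.sub_odd hYodd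
    obtain ⟨m, hm⟩ := hevXY
    have hm0 : 0 < m := by omega
    have hk : m * (m + Y) = 2 * D^2 := by
      have h4 : 4 * (m * (m + Y)) = 4 * (2*D^2) := by
        linear_combination hX - hY - (X + Y + 2*m) * hm
      exact mul_left_cancel₀ (by norm_num) h4
    have hk2pos : 0 < m + Y := by omega
    have hcok : IsCoprime m (m+Y) := by
      apply coprime_of_primes
      intro p hp h1 h2
      have hpX : (p:ℤ) ∣ X := by
        have hXmy : X = m + (m+Y) := by omega
        rw [hXmy]; exact dvd_add h1 h2
      have hpY : (p:ℤ) ∣ Y := by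
        have hYmy : Y = (m+Y) - m := by ring
        rw [hYmy]; exact dvd_sub h2 h1
      have hpne2 : p ≠ 2 := by
        rintro rfl
        have hXe : Even X := even_of_two_dvd (by exact_mod_cast hpX)
        rw [Int.odd_iff] at hXodd
        rw [Int.even_iff] at hXe
        omega
      have hp8 : (p:ℤ) ∣ 8*D^2 := by
        have h8 : 8*D^2 = X^2 - Y^2 := by linear_combination hY - hX
        rw [h8]
        exact dvd_sub (Dvd.dvd.pow hpX two_ne_zero) (Dvd.dvd.pow hpY two_ne_zero)
      have hpD : (p:ℤ) ∣ D := by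
        rcases (prime_int hp).2.2 8 (D^2) hp8 with h8 | hDd
        · exact absurd (p_dvd_eight hp h8) hpne2
        · exact prime_dvd_sq hp hDd
      have hpZ : (p:ℤ) ∣ Z := by
        apply prime_dvd_sq hp
        rw [← hX]
        exact dvd_add (Dvd.dvd.pow hpX two_ne_zero) (Dvd.dvd.pow hpD two_ne_zero)
      exact not_unit_prime hp (hco.isUnit_of_dvd' hpZ hpD)
    have hsum_odd : Odd (m + (m+Y)) := by
      have hXmy : m + (m+Y) = X := by omega
      rw [hXmy]; exact hXodd
    obtain ⟨s, t, hs0, ht0, htodd, hsne, htne, hcost, hD2eq, hsumeq, -⟩ :=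
      split2 hcok hk hm0 hk2pos hsum_odd hD
    have hXeq : X = 2*s^2 + t^2 := by omega
    have hZZ : (s^2+t^2) * (4*s^2+t^2) = Z^2 := by
      linear_combination hX - (X + 2*s^2 + t^2) * hXeq - hD2eq
    have hcof : IsCoprime (s^2+t^2) (4*s^2+t^2) := by
      apply coprime_of_primes
      intro p hp h1 h2
      have h3s : (p:ℤ) ∣ 3*s^2 := by
        have e : 3*s^2 = (4*s^2+t^2) - (s^2+t^2) := by ring
        rw [e]; exact dvd_sub h2 h1
      have h3t : (p:ℤ) ∣ 3*t^2 := by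
        have e : 3*t^2 = 4*(s^2+t^2) - (4*s^2+t^2) := by ring
        rw [e]; exact dvd_sub (Dvd.dvd.mul_left h1 4) h2
      by_cases hp3 : p = 3
      · subst hp3
        have h33 : ((3:ℕ):ℤ) = 3 := by norm_num
        rw [h33] at h1 h2 h3s h3t
        obtain ⟨hds, hdt⟩ := three_dvd h1
        apply not_unit_prime (by norm_num : Nat.Prime 3)
        rw [h33]
        exact hcost.isUnit_of_dvd' hds hdt
      · have hps : (p:ℤ) ∣ s := by
          rcases (prime_int hp).2.2 3 (s^2) h3s with h3 | hs2
          · exact absurd (p_dvd_three hp h3) hp3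
          · exact prime_dvd_sq hp hs2
        have hpt : (p:ℤ) ∣ t := by
          rcases (prime_int hp).2.2 3 (t^2) h3t with h3 | ht2
          · exact absurd (p_dvd_three hp h3) hp3
          · exact prime_dvd_sq hp ht2
        exact not_unit_prime hp (hcost.isUnit_of_dvd' hps hpt)
    have hposf1 : (0:ℤ) < s^2+t^2 := by positivity
    have hposf2 : (0:ℤ) < 4*s^2+t^2 := by positivity
    obtain ⟨u, v, hu0, hv0, hu, hv⟩ := split_sq hcof hZZ hposf1 hposf2
    have huv : u * v = |Z| := by
      have h1 : (u*v)^2 = Z^2 := by rw [mul_pow, ← hu, ← hv]; exact hZZ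
      have hz2 : |Z|^2 = Z^2 := sq_abs Z
      have h2 : (u*v - |Z|)*(u*v + |Z|) = 0 := by linear_combination h1 - hz2
      rcases mul_eq_zero.mp h2 with h | h
      · omega
      · exfalso
        have huvn : 0 ≤ u*v := mul_nonneg hu0 hv0
        have hZp : 0 < |Z| := abs_pos.mpr hZ0
        omega
    have hle2 : u^2 ≤ v^2 := by rw [← hu, ← hv]; linarith [sq_nonneg s]
    have hulev : u ≤ v := by
      by_contra hlt
      push_neg at hlt
      have hvu := pow_lt_pow_left₀ hlt hv0 two_ne_zero
      omega
    have hfin : u^2 ≤ |Z| := by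
      rw [← huv, pow_two]
      exact mul_le_mul_of_nonneg_left hulev hu0
    exact ⟨s, t, u, v, hsne, htne, hcost, htodd, hu, hv, hfin⟩

lemma one_le_sq {t : ℤ} (h : t ≠ 0) : 1 ≤ t^2 := by
  have h1 : 1 ≤ |t| := Int.one_le_abs h
  nlinarith [sq_abs t]

lemma lt_of_sq_lt {a b : ℤ} (ha : 0 ≤ a) (hb : 0 ≤ b) (h : a^2 < b^2) : a < b := by
  nlinarith

lemma even_sq_m4 {x : ℤ} (h : Even x) : x^2 % 4 = 0 := by
  obtain ⟨a, rfl⟩ := h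
  have e : (a+a)^2 = 4*a^2 := by ring
  rw [e]
  exact Int.mul_emod_right 4 _

lemma odd_sq_m4 {x : ℤ} (h : Odd x) : x^2 % 4 = 1 := by
  have := odd_sq_m8 h
  omega

lemma odd_of_odd_sq {x : ℤ} (h : Odd (x^2)) : Odd x := by
  rcases Int.even_or_odd x with he | ho
  · exfalso
    rw [Int.odd_iff] at h
    rw [Int.even_iff] at he
    have := parity_sq_mod2.1 (by rw [Int.even_iff]; exact he : Even x)
    omega
  · exact ho

theorem n4_false : ∀ (n : ℕ) (s t u v : ℤ), (s^2 + t^2).natAbs ≤ n → s ≠ 0 → t ≠ 0 →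
    IsCoprime s t → Odd t → s^2 + t^2 = u^2 → 4*s^2 + t^2 = v^2 → False := by
  intro n
  induction n using Nat.strong_induction_on with
  | _ n ih =>
  intro s t u v hn hs ht hco htodd hu hv
  -- replace u v by absolute values
  obtain ⟨u, hu0, hu⟩ : ∃ w:ℤ, 0 ≤ w ∧ s^2 + t^2 = w^2 :=
    ⟨|u|, abs_nonneg _, by rw [sq_abs]; exact hu⟩
  obtain ⟨v, hv0, hv⟩ : ∃ w:ℤ, 0 ≤ w ∧ 4*s^2 + t^2 = w^2 :=
    ⟨|v|, abs_nonneg _, by rw [sq_abs]; exact hv⟩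
  have ht1 : 1 ≤ t^2 := one_le_sq ht
  -- s is even
  have hseven : Even s := by
    rcases Int.even_or_odd s with he | ho
    · exact he
    · exfalso
      have h1 := odd_sq_m4 ho
      have h2 := odd_sq_m4 htodd
      have h3 := sqm4 u
      omega
  obtain ⟨σ, hσeq⟩ := hseven
  have hσ : s = 2*σ := by omega
  have hσne : σ ≠ 0 := by rintro rfl; omega
  have hσ1 : 1 ≤ σ^2 := one_le_sq hσne
  have hs2 : s^2 = 4*σ^2 := by rw [hσ]; ring
  -- u, v odd and positive
  have huodd : Odd u := by
    apply odd_of_odd_sq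
    rw [← hu, Int.odd_iff]
    have h1 := parity_sq_mod2.1 ⟨σ, hσeq⟩
    have h2 : t^2 % 2 = 1 := Int.odd_iff.mp htodd.pow
    omega
  have hvodd : Odd v := by
    apply odd_of_odd_sq
    rw [← hv, Int.odd_iff]
    have h1 := parity_sq_mod2.1 ⟨σ, hσeq⟩
    have h2 : t^2 % 2 = 1 := Int.odd_iff.mp htodd.pow
    omega
  have hupos : 0 < u := by
    rcases lt_or_eq_of_le hu0 with h | h
    · exact h
    · exfalso; rw [← h] at hu; simp at hu; linarith [ht1, hσ1, hs2, hu]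
  have hvpos : 0 < v := by
    rcases lt_or_eq_of_le hv0 with h | h
    · exact h
    · exfalso; rw [← h] at hv; simp at hv; linarith [ht1, hσ1, hs2, hv]
  have hultv : u < v := by
    apply lt_of_sq_lt hu0 hv0
    linarith [hu, hv, hs2, hσ1]
  -- u ≥ 3 and v < 2u
  have hu5 : 5 ≤ u^2 := by linarith [hu, hs2, hσ1, ht1]
  have hu3 : 3 ≤ u := by
    by_contra hc
    push_neg at hc
    have h22 : u*u ≤ 2*2 := mul_le_mul (by omega) (by omega) hu0 (by norm_num)
    have he : u^2 = u*u := sq u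
    linarith
  have hvlt : v < 2*u := by
    have h4u : v^2 < (2*u)^2 := by
      have e : (2*u)^2 = 4*u^2 := by ring
      rw [e]; linarith [hv, hu, ht1]
    exact lt_of_sq_lt hv0 (by omega) h4u
  -- halves
  obtain ⟨m, hm⟩ := hvodd.sub_odd huodd
  have hm0 : 0 < m := by omega
  have hk : m * (m + u) = 3 * σ^2 := by
    have h4 : 4 * (m * (m + u)) = 4 * (3 * σ^2) := by
      linear_combination hu - hv - (v + u + 2*m) * hm + 3*(s + 2*σ)*hσ
    exact mul_left_cancel₀ (by norm_num) h4
  have hk2pos : 0 < m + u := by omega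
  have hveq : v = m + (m + u) := by omega
  have hcok : IsCoprime m (m + u) := by
    apply coprime_of_primes
    intro p hp h1 h2
    have hpu : (p:ℤ) ∣ u := by
      have e : u = (m+u) - m := by ring
      rw [e]; exact dvd_sub h2 h1
    have hpv : (p:ℤ) ∣ v := by rw [hveq]; exact dvd_add h1 h2
    have hp3s : (p:ℤ) ∣ 3*s^2 := by
      have e2 : 3*s^2 = v^2 - u^2 := by linear_combination hv - hu
      rw [e2]
      exact dvd_sub (Dvd.dvd.pow hpv two_ne_zero) (Dvd.dvd.pow hpu two_ne_zero)
    by_cases hp3 : p = 3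
    · subst hp3
      have h33 : ((3:ℕ):ℤ) = 3 := by norm_num
      rw [h33] at hpu
      have h3u2 : (3:ℤ) ∣ s^2 + t^2 := by rw [hu]; exact Dvd.dvd.pow hpu two_ne_zero
      obtain ⟨hds, hdt⟩ := three_dvd h3u2
      apply not_unit_prime (by norm_num : Nat.Prime 3)
      rw [h33]
      exact hco.isUnit_of_dvd' hds hdt
    · have hps : (p:ℤ) ∣ s := by
        rcases (prime_int hp).2.2 3 (s^2) hp3s with h3 | hs2'
        · exact absurd (p_dvd_three hp h3) hp3
        · exact prime_dvd_sq hp hs2'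
      have hpt : (p:ℤ) ∣ t := by
        apply prime_dvd_sq hp
        have e : t^2 = u^2 - s^2 := by linear_combination hu
        rw [e]
        exact dvd_sub (Dvd.dvd.pow hpu two_ne_zero) (Dvd.dvd.pow hps two_ne_zero)
      exact not_unit_prime hp (hco.isUnit_of_dvd' hps hpt)
  have hsum_odd : Odd (m + (m + u)) := by rw [← hveq]; exact hvodd
  obtain ⟨α, β, hα0, hβ0, hαne, hβne, hcoαβ, hpar, hσ2, hsumeq, hdiffeq, hβlt⟩ :=
    split3 hcok hk hm0 hk2pos hsum_odd hσne
  -- u² = (β²-3α²)², v = 3α²+β²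
  have husq : u^2 = (β^2 - 3*α^2)^2 := by
    have e : (m + u) - m = u := by ring
    rw [← e]; exact hdiffeq
  have hβltv : β^2 < v := by rw [hveq]; exact hβlt
  -- t² = (β²-α²)(β²-9α²)
  have htsq : t^2 = (β^2 - α^2) * (β^2 - 9*α^2) := by
    linear_combination hu + husq - (s + 2*σ)*hσ - 4*hσ2
  have hα1 : 1 ≤ α^2 := one_le_sq hαne
  have hβ1 : 1 ≤ β^2 := one_le_sq hβne
  -- F1 odd
  have hF1odd : Odd (β^2 - α^2) := by
    rcases hpar with ⟨heα, hoβ⟩ | ⟨hoα, heβ⟩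
    · exact (hoβ.pow).sub_even ((even_sq_iff α).mpr heα)
    · exact (((even_sq_iff β).mpr heβ)).sub_odd (hoα.pow)
  have hcoF : IsCoprime (β^2 - α^2) (β^2 - 9*α^2) := by
    apply coprime_of_primes
    intro p hp h1 h2
    have hpne2 : p ≠ 2 := by
      rintro rfl
      rw [Int.odd_iff] at hF1odd
      obtain ⟨c, hc⟩ := h1
      omega
    have h8a : (p:ℤ) ∣ 8*α^2 := by
      have e : 8*α^2 = (β^2 - α^2) - (β^2 - 9*α^2) := by ring
      rw [e]; exact dvd_sub h1 h2
    have h8b : (p:ℤ) ∣ 8*β^2 := by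
      have e : 8*β^2 = 9*(β^2 - α^2) - (β^2 - 9*α^2) := by ring
      rw [e]; exact dvd_sub (Dvd.dvd.mul_left h1 9) h2
    have hpa : (p:ℤ) ∣ α := by
      rcases (prime_int hp).2.2 8 (α^2) h8a with h8 | ha2
      · exact absurd (p_dvd_eight hp h8) hpne2
      · exact prime_dvd_sq hp ha2
    have hpb : (p:ℤ) ∣ β := by
      rcases (prime_int hp).2.2 8 (β^2) h8b with h8 | hb2
      · exact absurd (p_dvd_eight hp h8) hpne2
      · exact prime_dvd_sq hp hb2
    exact not_unit_prime hp (hcoαβ.isUnit_of_dvd' hpa hpb)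
  -- sign analysis
  rcases lt_trichotomy 0 (β^2 - α^2) with hsgn | hsgn | hsgn
  · -- both factors positive : CASE POS
    have hF2pos : 0 < β^2 - 9*α^2 := by
      by_contra hc
      push_neg at hc
      have hk2 : (β^2-α^2) * (β^2-9*α^2) ≤ (β^2-α^2) * 0 :=
        mul_le_mul_of_nonneg_left hc hsgn.le
      rw [mul_zero] at hk2
      linarith [htsq, ht1]
    obtain ⟨p, q, hp0, hq0, hpeq, hqeq⟩ := split_sq hcoF htsq.symm hsgn hF2pos
    have hQ1 : p^2 + α^2 = β^2 := by linarith [hpeq]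
    have hQ2 : q^2 + 9*α^2 = β^2 := by linarith [hqeq]
    obtain ⟨s₁, t₁, u₁, v₁, hs₁, ht₁, hco₁, hodd₁, he₁, he₂, hle₁⟩ :=
      q_to_n4 β.natAbs p q β α le_rfl hαne hQ1 hQ2
    have hβabs : |β| = β := abs_of_nonneg hβ0
    have hmeas : s₁^2 + t₁^2 < s^2 + t^2 := by
      have c1 : u₁^2 ≤ β := by rw [← hβabs]; exact hle₁
      have c2 : β ≤ β^2 := by
        have hβge1 : 1 ≤ β := by omega
        have hm1 := mul_le_mul_of_nonneg_right hβge1 (by omega : (0:ℤ) ≤ β)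
        have e1 : 1*β = β := one_mul β
        have e2 : β*β = β^2 := (sq β).symm
        linarith
      have c3 : v < 2*u := hvlt
      have c4 : 2*u < u^2 := by
        have hm1 := mul_le_mul_of_nonneg_right hu3 (by omega : (0:ℤ) ≤ u)
        have e2 : u*u = u^2 := (sq u).symm
        linarith
      have c5 : u^2 = s^2 + t^2 := hu.symm
      omega
    have hnatlt : (s₁^2 + t₁^2).natAbs < n := by
      have h1 : 0 ≤ s₁^2 + t₁^2 := by positivity
      have h2 : 0 ≤ s^2 + t^2 := by positivity
      omega
    exact ih _ hnatlt s₁ t₁ u₁ v₁ le_rfl hs₁ ht₁ hco₁ hodd₁ he₁ he₂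
  · -- β² = α² : impossible
    have : t^2 = 0 := by rw [htsq, ← hsgn]; ring
    omega
  · -- both factors negative : CASE NEG
    have hF2neg : β^2 - 9*α^2 < 0 := by nlinarith
    have hnegprod : (α^2 - β^2) * (9*α^2 - β^2) = t^2 := by linear_combination -htsq
    have hcoF' : IsCoprime (α^2 - β^2) (9*α^2 - β^2) := by
      have e1 : α^2 - β^2 = -(β^2 - α^2) := by ring
      have e2 : 9*α^2 - β^2 = -(β^2 - 9*α^2) := by ring
      rw [e1, e2]
      exact (hcoF.neg_left).neg_right
    obtain ⟨p, q, hp0, hq0, hpeq, hqeq⟩ :=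
      split_sq hcoF' hnegprod (by omega) (by omega)
    -- parity: α odd, β even
    have hparity : Odd α ∧ Even β := by
      rcases hpar with ⟨heα, hoβ⟩ | h
      · exfalso
        have h1 : α^2 % 4 = 0 := even_sq_m4 heα
        have h2 : β^2 % 4 = 1 := odd_sq_m4 hoβ
        have h3 := sqm4 p
        omega
      · exact h
    obtain ⟨hoα, heβ⟩ := hparity
    have hqp : q^2 - p^2 = 8*α^2 := by linear_combination hpeq - hqeq
    have hpodd : Odd p := by
      apply odd_of_odd_sq
      rw [← hpeq, Int.odd_iff]
      have h1 := odd_sq_m4 hoα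
      have h2 := even_sq_m4 heβ
      omega
    have hqodd : Odd q := by
      apply odd_of_odd_sq
      rw [← hqeq, Int.odd_iff]
      have h1 := odd_sq_m4 hoα
      have h2 := even_sq_m4 heβ
      omega
    have hqgtp : p < q := by
      apply lt_of_sq_lt hp0 hq0
      linarith [hqp, hα1]
    obtain ⟨m2, hm2⟩ := hqodd.sub_odd hpodd
    have hm20 : 0 < m2 := by omega
    have hk' : m2 * (m2 + p) = 2 * α^2 := by
      have h4 : 4 * (m2 * (m2 + p)) = 4 * (2 * α^2) := by
        linear_combination hpeq - hqeq - (q + p + 2*m2) * hm2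
      exact mul_left_cancel₀ (by norm_num) h4
    have hk2pos' : 0 < m2 + p := by omega
    have hcok' : IsCoprime m2 (m2 + p) := by
      apply coprime_of_primes
      intro r hr h1 h2
      have hrp : (r:ℤ) ∣ p := by
        have e : p = (m2+p) - m2 := by ring
        rw [e]; exact dvd_sub h2 h1
      have hrne2 : r ≠ 2 := by
        rintro rfl
        rw [Int.odd_iff] at hpodd
        obtain ⟨c, hc⟩ := hrp
        omega
      have hr8 : (r:ℤ) ∣ 8*α^2 := by
        rw [← hqp]
        have hrq : (r:ℤ) ∣ q := by
          have e : q = p + 2*m2 := by omega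
          rw [e]
          exact dvd_add hrp (Dvd.dvd.mul_left h1 2)
        exact dvd_sub (Dvd.dvd.pow hrq two_ne_zero) (Dvd.dvd.pow hrp two_ne_zero)
      have hrα : (r:ℤ) ∣ α := by
        rcases (prime_int hr).2.2 8 (α^2) hr8 with h8 | ha2
        · exact absurd (p_dvd_eight hr h8) hrne2
        · exact prime_dvd_sq hr ha2
      have hrβ : (r:ℤ) ∣ β := by
        apply prime_dvd_sq hr
        have e : β^2 = α^2 - p^2 := by linear_combination - hpeq
        rw [e]
        exact dvd_sub (Dvd.dvd.pow hrα two_ne_zero) (Dvd.dvd.pow hrp two_ne_zero)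
      exact not_unit_prime hr (hcoαβ.isUnit_of_dvd' hrα hrβ)
    have hsum_odd' : Odd (m2 + (m2 + p)) := by
      have e : m2 + (m2 + p) = q := by omega
      rw [e]; exact hqodd
    obtain ⟨γ, δ, hγ0, hδ0, hδodd, hγne, hδne, hcoγδ, hα2, hsum2, hdiff2⟩ :=
      split2 hcok' hk' hm20 hk2pos' hsum_odd' hαne
    have hγ1 : 1 ≤ γ^2 := one_le_sq hγne
    have hδ1 : 1 ≤ δ^2 := one_le_sq hδne
    have hpsq : p^2 = (δ^2 - 2*γ^2)^2 := by
      have e : (m2 + p) - m2 = p := by ring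
      rw [← e]; exact hdiff2
    have hβ2 : β^2 = (δ^2 - γ^2) * (4*γ^2 - δ^2) := by
      linear_combination - hpeq + hα2 - hpsq
    -- both factors positive
    have hG1pos : 0 < δ^2 - γ^2 := by
      rcases lt_trichotomy 0 (δ^2 - γ^2) with h | h | h
      · exact h
      · exfalso
        have hz : β^2 = 0 := by rw [hβ2, ← h]; ring
        omega
      · exfalso
        rcases le_or_gt (4*γ^2 - δ^2) 0 with h2 | h2
        · linarith [sq_nonneg γ]
        · have hneg : (δ^2 - γ^2) * (4*γ^2 - δ^2) < 0 := mul_neg_of_neg_of_pos h h2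
          linarith [hβ2, hβ1, hneg]
    have hG2pos : 0 < 4*γ^2 - δ^2 := by
      rcases le_or_gt (4*γ^2 - δ^2) 0 with h2 | h2
      · exfalso
        have hk2 : (δ^2-γ^2) * (4*γ^2-δ^2) ≤ (δ^2-γ^2) * 0 :=
          mul_le_mul_of_nonneg_left h2 hG1pos.le
        rw [mul_zero] at hk2
        linarith [hβ2, hβ1]
      · exact h2
    by_cases h3 : (3:ℤ) ∣ (δ^2 - γ^2)
    · -- 3 divides both factors : descend
      obtain ⟨D1, hD1⟩ := h3
      have hD2' : 4*γ^2 - δ^2 = 3*(γ^2 - D1) := by linarith [hD1]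
      set D2 : ℤ := γ^2 - D1 with hD2def
      have hβsq9 : β^2 = 9*(D1*D2) := by rw [hβ2, hD1, hD2']; ring
      have h3β : (3:ℤ) ∣ β := by
        have h33 : ((3:ℕ):ℤ) = 3 := by norm_num
        apply prime_dvd_sq (by norm_num : Nat.Prime 3)
        rw [h33, hβsq9]
        exact ⟨3*(D1*D2), by ring⟩
      obtain ⟨β', hβ'⟩ := h3β
      have hββ' : D1 * D2 = β'^2 := by
        have h9 : 9 * (D1*D2) = 9 * β'^2 := by rw [← hβsq9, hβ']; ring
        exact mul_left_cancel₀ (by norm_num) h9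
      have hD1pos : 0 < D1 := by linarith [hG1pos, hD1]
      have hD2pos : 0 < D2 := by linarith [hG2pos, hD2']
      have hsumD : D1 + D2 = γ^2 := by omega
      have hsumD4 : 4*D1 + D2 = δ^2 := by omega
      have hcoD : IsCoprime D1 D2 := by
        apply coprime_of_primes
        intro r hr h1 h2
        have hrγ : (r:ℤ) ∣ γ := by
          apply prime_dvd_sq hr
          rw [← hsumD]; exact dvd_add h1 h2
        have hrδ : (r:ℤ) ∣ δ := by
          apply prime_dvd_sq hr
          rw [← hsumD4]; exact dvd_add (Dvd.dvd.mul_left h1 4) h2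
        exact not_unit_prime hr (hcoγδ.isUnit_of_dvd' hrγ hrδ)
      obtain ⟨A, B, hA0, hB0, hA, hB⟩ := split_sq hcoD hββ' hD1pos hD2pos
      have hN1 : A^2 + B^2 = γ^2 := by omega
      have hN2 : 4*A^2 + B^2 = δ^2 := by omega
      have hAne : A ≠ 0 := by rintro rfl; simp at hA; omega
      have hBne : B ≠ 0 := by rintro rfl; simp at hB; omega
      have hcoAB : IsCoprime A B := by
        apply coprime_of_primes
        intro r hr h1 h2
        have hrγ : (r:ℤ) ∣ γ := by
          apply prime_dvd_sq hr
          rw [← hN1]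
          exact dvd_add (Dvd.dvd.pow h1 two_ne_zero) (Dvd.dvd.pow h2 two_ne_zero)
        have hrδ : (r:ℤ) ∣ δ := by
          apply prime_dvd_sq hr
          rw [← hN2]
          exact dvd_add (Dvd.dvd.mul_left (Dvd.dvd.pow h1 two_ne_zero) 4)
            (Dvd.dvd.pow h2 two_ne_zero)
        exact not_unit_prime hr (hcoγδ.isUnit_of_dvd' hrγ hrδ)
      have hBodd : Odd B := by
        apply odd_of_odd_sq
        rw [Int.odd_iff]
        have h1 : δ^2 % 2 = 1 := Int.odd_iff.mp hδodd.pow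
        have h2 := sqm4 A
        omega
      have hmeas : A^2 + B^2 < s^2 + t^2 := by
        have d1 := mul_le_mul_of_nonneg_left hδ1 (sq_nonneg γ)
        have d2 := mul_le_mul_of_nonneg_left hβ1 (sq_nonneg α)
        have e1 : γ^2*1 = γ^2 := mul_one _
        have e2 : α^2*1 = α^2 := mul_one _
        have c1 : γ^2 ≤ α^2 := by linarith [hα2]
        have c2 : α^2 ≤ σ^2 := by linarith [hσ2]
        omega
      have hnatlt : (A^2 + B^2).natAbs < n := by
        have h1 : 0 ≤ A^2 + B^2 := by positivity
        have h2 : 0 ≤ s^2 + t^2 := by positivity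
        omega
      exact ih _ hnatlt A B γ δ le_rfl hAne hBne hcoAB hBodd hN1 hN2
    · -- 3 divides neither : mod 3 contradiction
      have hcoG : IsCoprime (δ^2 - γ^2) (4*γ^2 - δ^2) := by
        apply coprime_of_primes
        intro r hr h1 h2
        have hr3γ : (r:ℤ) ∣ 3*γ^2 := by
          have e : 3*γ^2 = (δ^2 - γ^2) + (4*γ^2 - δ^2) := by ring
          rw [e]; exact dvd_add h1 h2
        have hr3δ : (r:ℤ) ∣ 3*δ^2 := by
          have e : 3*δ^2 = 4*(δ^2 - γ^2) + (4*γ^2 - δ^2) := by ring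
          rw [e]; exact dvd_add (Dvd.dvd.mul_left h1 4) h2
        by_cases hr3 : r = 3
        · subst hr3
          have h33 : ((3:ℕ):ℤ) = 3 := by norm_num
          rw [h33] at h1
          exact h3 h1
        · have hrγ : (r:ℤ) ∣ γ := by
            rcases (prime_int hr).2.2 3 (γ^2) hr3γ with hh | hh
            · exact absurd (p_dvd_three hr hh) hr3
            · exact prime_dvd_sq hr hh
          have hrδ : (r:ℤ) ∣ δ := by
            rcases (prime_int hr).2.2 3 (δ^2) hr3δ with hh | hh
            · exact absurd (p_dvd_three hr hh) hr3
            · exact prime_dvd_sq hr hh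
          exact not_unit_prime hr (hcoγδ.isUnit_of_dvd' hrγ hrδ)
      obtain ⟨A, B, hA0, hB0, hA, hB⟩ := split_sq hcoG hβ2.symm hG1pos hG2pos
      have hsumAB : A^2 + B^2 = 3*γ^2 := by omega
      have h3dvd : (3:ℤ) ∣ A^2 + B^2 := ⟨γ^2, hsumAB⟩
      obtain ⟨h3A, h3B⟩ := three_dvd h3dvd
      obtain ⟨A', hA'⟩ := h3A
      obtain ⟨B', hB'⟩ := h3B
      have h3γ2 : γ^2 = 3*(A'^2 + B'^2) := by
        have e : 3*(3*(A'^2+B'^2)) = 3*γ^2 := by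
          rw [← hsumAB, hA', hB']; ring
        have := mul_left_cancel₀ (by norm_num : (3:ℤ) ≠ 0) e
        omega
      have h3γ : (3:ℤ) ∣ γ := by
        apply prime_dvd_sq (by norm_num : Nat.Prime 3)
        have h33 : ((3:ℕ):ℤ) = 3 := by norm_num
        rw [h33]
        exact ⟨A'^2+B'^2, h3γ2⟩
      have h3δ : (3:ℤ) ∣ δ := by
        apply prime_dvd_sq (by norm_num : Nat.Prime 3)
        have h33 : ((3:ℕ):ℤ) = 3 := by norm_num
        rw [h33]
        have e : δ^2 = A^2 + γ^2 := by omega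
        rw [e, hA']
        obtain ⟨γ', hγ'⟩ := h3γ
        exact ⟨3*A'^2 + 3*γ'^2, by rw [hγ']; ring⟩
      apply not_unit_prime (by norm_num : Nat.Prime 3)
      have h33 : ((3:ℕ):ℤ) = 3 := by norm_num
      rw [h33]
      exact hcoγδ.isUnit_of_dvd' h3γ h3δ

theorem no_four_squares_in_nontrivial_AP :
    ¬ ∃ (a b c d e : ℚ), e ≠ 0 ∧ b^2 - a^2 = e ∧ c^2 - b^2 = e ∧ d^2 - c^2 = e := by
  rintro ⟨a, b, c, d, e, he, h1, h2, h3⟩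
  have key : ∀ q : ℚ, (q.num : ℚ) = q * q.den := fun q =>
    (div_eq_iff (by exact_mod_cast q.den_nz : ((q.den:ℚ)) ≠ 0)).mp (Rat.num_div_den q)
  obtain ⟨N, hN⟩ : ∃ N : ℚ, N = (a.den : ℚ) * b.den * c.den * d.den := ⟨_, rfl⟩
  have hN0 : N ≠ 0 := by
    rw [hN]
    have ha' : ((a.den:ℚ)) ≠ 0 := by exact_mod_cast a.den_nz
    have hb' : ((b.den:ℚ)) ≠ 0 := by exact_mod_cast b.den_nz
    have hc' : ((c.den:ℚ)) ≠ 0 := by exact_mod_cast c.den_nz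
    have hd' : ((d.den:ℚ)) ≠ 0 := by exact_mod_cast d.den_nz
    exact mul_ne_zero (mul_ne_zero (mul_ne_zero ha' hb') hc') hd'
  obtain ⟨A, hAdef⟩ : ∃ A : ℤ, A = a.num * (b.den * c.den * d.den) := ⟨_, rfl⟩
  obtain ⟨B, hBdef⟩ : ∃ B : ℤ, B = b.num * (a.den * c.den * d.den) := ⟨_, rfl⟩
  obtain ⟨C, hCdef⟩ : ∃ C : ℤ, C = c.num * (a.den * b.den * d.den) := ⟨_, rfl⟩
  obtain ⟨D, hDdef⟩ : ∃ D : ℤ, D = d.num * (a.den * b.den * c.den) := ⟨_, rfl⟩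
  have hA : ((A:ℤ):ℚ) = a * N := by
    rw [hAdef, hN]; push_cast; rw [key a]; ring
  have hB : ((B:ℤ):ℚ) = b * N := by
    rw [hBdef, hN]; push_cast; rw [key b]; ring
  have hC : ((C:ℤ):ℚ) = c * N := by
    rw [hCdef, hN]; push_cast; rw [key c]; ring
  have hD : ((D:ℤ):ℚ) = d * N := by
    rw [hDdef, hN]; push_cast; rw [key d]; ring
  obtain ⟨E, hEdef⟩ : ∃ E : ℤ, E = B^2 - A^2 := ⟨_, rfl⟩
  have hEq : ((E:ℤ):ℚ) = e * N^2 := by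
    rw [hEdef]; push_cast; rw [hA, hB]
    linear_combination N^2 * h1
  have hEne : E ≠ 0 := by
    intro h
    have h0 : e * N^2 = 0 := by rw [← hEq, h]; norm_num
    rcases mul_eq_zero.mp h0 with h' | h'
    · exact he h'
    · exact pow_ne_zero 2 hN0 h'
  have hCB : C^2 - B^2 = E := by
    have hq : ((C^2 - B^2 : ℤ):ℚ) = ((E:ℤ):ℚ) := by
      push_cast
      rw [hB, hC, hEq]
      linear_combination N^2 * h2
    exact_mod_cast hq
  have hDC : D^2 - C^2 = E := by
    have hq : ((D^2 - C^2 : ℤ):ℚ) = ((E:ℤ):ℚ) := by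
      push_cast
      rw [hC, hD, hEq]
      linear_combination N^2 * h3
    exact_mod_cast hq
  have hA2 : A^2 = 2*B^2 - C^2 := by omega
  have hD2 : D^2 = 2*C^2 - B^2 := by omega
  have hQ1 : (2*B*C)^2 + E^2 = (B^2+C^2)^2 := by
    linear_combination (-(E + C^2 - B^2)) * hCB
  have hQ2 : (2*A*D)^2 + 9*E^2 = (B^2+C^2)^2 := by
    linear_combination (4*D^2)*hA2 + (4*(2*B^2 - C^2))*hD2 - 9*(E + C^2 - B^2)*hCB
  obtain ⟨s, t, u, v, hs, ht, hco, hodd, he1, he2, -⟩ :=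
    q_to_n4 (B^2+C^2).natAbs (2*B*C) (2*A*D) (B^2+C^2) E le_rfl hEne hQ1 hQ2
  exact n4_false (s^2+t^2).natAbs s t u v le_rfl hs ht hco hodd he1 he2
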